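/- Suppose the weight data satisfy the Li identities. Then for every k ∈ {0, …, n−1}, the number of times the weight a occurs at points of index k equals the number of times the weight −a occurs at points of index k+1; that is, ∑_{p ∈ P, λ_p = k} ν_p(a) = ∑_{p ∈ P, λ_p = k+1} ν_p(−a). (This is the combinatorial core of Proposition 2.2: for a circle action on a closed almost complex manifold with isolated fixed points, the weight data at the fixed points satisfy the Li identities by P. Li's theorem, and after reversing the action one may assume all weights have absolute value at least the smallest positive weight a.) -/

import Mathlib

open Finset

noncomputable section LiAux
namespace LiAux
open Finset HahnSeries
open scoped RatFunc

abbrev LK := LaurentSeries ℚ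

def T (v : ℤ) : LK := HahnSeries.single v 1

lemma T_mul (v u : ℤ) : T v * T u = T (v + u) := by
  simp [T, single_mul_single]

lemma T_zero : T 0 = 1 := rfl

lemma T_coeff (v m : ℤ) : (T v).coeff m = if m = v then 1 else 0 := by
  rw [T, coeff_single]; congr 1

lemma T_one_pow (m : ℕ) : (T 1) ^ m = T m := by
  simp [T, single_pow]

lemma T_one_zpow (v : ℤ) : (T 1) ^ v = T v := by
  rcases v with m | m
  · simpa using T_one_pow m
  · rw [zpow_negSucc, T_one_pow]
    refine inv_eq_of_mul_eq_one_right ?_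
    rw [T_mul]
    have : ((m + 1 : ℕ) : ℤ) + Int.negSucc m = 0 := by
      simp [Int.negSucc_eq]
    rw [this, T_zero]

lemma coe_X_zpow (v : ℤ) :
    (algebraMap (RatFunc ℚ) LK) ((RatFunc.X : RatFunc ℚ) ^ v) = T v := by
  rw [map_zpow₀]
  have : (algebraMap (RatFunc ℚ) LK) RatFunc.X = T 1 := by
    have := RatFunc.coe_X (F := ℚ)
    exact this
  rw [this, T_one_zpow]


/-- All coefficients in degrees `< 0` vanish. -/
def Onn (x : LK) : Prop := ∀ m : ℤ, m < 0 → x.coeff m = 0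

/-- All coefficients in degrees `≤ a` vanish. -/
def Olt (a : ℤ) (x : LK) : Prop := ∀ m : ℤ, m ≤ a → x.coeff m = 0

lemma Onn.add {x y : LK} (hx : Onn x) (hy : Onn y) : Onn (x + y) := fun m hm => by
  rw [coeff_add, hx m hm, hy m hm, add_zero]

lemma Olt.add {a : ℤ} {x y : LK} (hx : Olt a x) (hy : Olt a y) : Olt a (x + y) := fun m hm => by
  rw [coeff_add, hx m hm, hy m hm, add_zero]

lemma Onn.neg {x : LK} (hx : Onn x) : Onn (-x) := fun m hm => by
  rw [coeff_neg, hx m hm, neg_zero]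

lemma Olt.neg {a : ℤ} {x : LK} (hx : Olt a x) : Olt a (-x) := fun m hm => by
  rw [coeff_neg, hx m hm, neg_zero]

lemma Onn.sub {x y : LK} (hx : Onn x) (hy : Onn y) : Onn (x - y) := by
  rw [sub_eq_add_neg]; exact hx.add hy.neg

lemma Olt.sub {a : ℤ} {x y : LK} (hx : Olt a x) (hy : Olt a y) : Olt a (x - y) := by
  rw [sub_eq_add_neg]; exact hx.add hy.neg

lemma Onn.mul {x y : LK} (hx : Onn x) (hy : Onn y) : Onn (x * y) := fun m hm => by
  rw [coeff_mul]
  refine Finset.sum_eq_zero fun ij hij => ?_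
  rw [Finset.mem_addAntidiagonal] at hij
  by_cases h1 : ij.1 < 0
  · rw [hx ij.1 h1, zero_mul]
  · have : ij.2 < 0 := by omega
    rw [hy ij.2 this, mul_zero]

lemma Olt.mul_onn {a : ℤ} {x y : LK} (hx : Olt a x) (hy : Onn y) : Olt a (x * y) :=
  fun m hm => by
  rw [coeff_mul]
  refine Finset.sum_eq_zero fun ij hij => ?_
  rw [Finset.mem_addAntidiagonal] at hij
  by_cases h1 : ij.1 ≤ a
  · rw [hx ij.1 h1, zero_mul]
  · have : ij.2 < 0 := by omega
    rw [hy ij.2 this, mul_zero]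

lemma Onn.mul_olt {a : ℤ} {x y : LK} (hx : Onn x) (hy : Olt a y) : Olt a (x * y) := by
  rw [mul_comm]; exact hy.mul_onn hx

lemma Olt.onn {a : ℤ} (ha : 0 < a) {x : LK} (hx : Olt a x) : Onn x := fun m hm =>
  hx m (by omega)

lemma Onn_T {v : ℤ} (hv : 0 ≤ v) : Onn (T v) := fun m hm => by
  rw [T_coeff, if_neg (by omega)]

lemma Olt_T {a v : ℤ} (hv : a < v) : Olt a (T v) := fun m hm => by
  rw [T_coeff, if_neg (by omega)]

lemma Onn_zero : Onn (0 : LK) := fun m _ => rfl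
lemma Olt_zero {a : ℤ} : Olt a (0 : LK) := fun m _ => rfl

lemma Onn_one : Onn (1 : LK) := by rw [← T_zero]; exact Onn_T le_rfl

/-- constants -/
lemma C_eq_single (q : ℚ) : (HahnSeries.C q : LK) = HahnSeries.single 0 q := rfl

lemma C_coeff (q : ℚ) (m : ℤ) : (HahnSeries.C q : LK).coeff m = if m = 0 then q else 0 := by
  rw [C_eq_single, coeff_single]; congr 1

lemma Onn_C (q : ℚ) : Onn (HahnSeries.C q : LK) := fun m hm => by
  rw [C_coeff, if_neg (by omega)]

lemma C_mul_T_coeff (q : ℚ) (a m : ℤ) :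
    (HahnSeries.C q * T a : LK).coeff m = if m = a then q else 0 := by
  rw [C_eq_single, T, single_mul_single, zero_add, mul_one, coeff_single]
  congr 1

lemma Onn_C_mul_T (q : ℚ) {v : ℤ} (hv : 0 ≤ v) : Onn (HahnSeries.C q * T v : LK) :=
  (Onn_C q).mul (Onn_T hv)


lemma Onn_ofPowerSeries (f : PowerSeries ℚ) : Onn (ofPowerSeries ℤ ℚ f : LK) := by
  intro m hm
  rw [ofPowerSeries_apply]
  refine embDomain_of_notMem_range ?_
  rintro ⟨k, hk⟩
  have hk2 : (k : ℤ) = m := hk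
  omega

lemma one_sub_T_ne_zero {v : ℤ} (hv : v ≠ 0) : (1 - T v : LK) ≠ 0 := by
  intro h
  have := congrArg (fun x : LK => x.coeff v) h
  simp only [coeff_sub, T_coeff, if_pos rfl, coeff_one, if_neg hv, coeff_zero] at this
  norm_num at this

/-- The key inverse expansion for `w ≥ a > 0`. -/
lemma inv_one_sub {a v : ℤ} (ha : 0 < a) (hv : a ≤ v) :
    ∃ ρ : LK, Onn ρ ∧ Olt a ρ ∧
      (1 - T v)⁻¹ = 1 + (if v = a then T a else 0) + ρ := by
  have hv0 : (0:ℤ) < v := lt_of_lt_of_le ha hv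
  set v' : ℕ := v.toNat with hv'
  have hvv : (v' : ℤ) = v := Int.toNat_of_nonneg hv0.le
  set f : PowerSeries ℚ := 1 - PowerSeries.X ^ v' with hf
  have hc : PowerSeries.constantCoeff f ≠ 0 := by
    rw [hf]
    have hv'0 : v' ≠ 0 := by omega
    rw [map_sub, map_one, map_pow, PowerSeries.constantCoeff_X]
    simp [zero_pow hv'0]
  set u : LK := ofPowerSeries ℤ ℚ f⁻¹ with hu
  have hmap : (ofPowerSeries ℤ ℚ f : LK) = 1 - T v := by
    rw [hf, map_sub, map_one, map_pow, ofPowerSeries_X]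
    congr 2
    rw [← hvv]
    exact T_one_pow v'
  have hone : (1 - T v) * u = 1 := by
    rw [← hmap, hu, ← map_mul, PowerSeries.mul_inv_cancel f hc, map_one]
  have hinv : (1 - T v)⁻¹ = u := inv_eq_of_mul_eq_one_right hone
  have hOu : Onn u := Onn_ofPowerSeries _
  refine ⟨u - 1 - (if v = a then T a else 0), (hOu.sub Onn_one).sub ?_, ?_, by
    rw [hinv]; ring⟩
  · by_cases h : v = a
    · rw [if_pos h]; exact Onn_T ha.le
    · rw [if_neg h]; exact Onn_zero
  · -- Olt: (u - 1 - ε) = τ * u with τ = T (2a) or T v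
    have key : u - 1 - (if v = a then T a else 0)
        = (if v = a then T (a + a) else T v) * u := by
      have h2 : (1 - T v) * (u - 1 - (if v = a then T a else 0))
          = (1 - T v) * ((if v = a then T (a + a) else T v) * u) := by
        by_cases h : v = a
        · subst h
          rw [if_pos rfl, if_pos rfl]
          have e1 : (1 - T v) * (u - 1 - T v) = (1 - T v) * u - (1 - T v) * (1 + T v) := by ring
          rw [e1, hone]
          have e2 : (1 - T v) * (1 + T v) = 1 - T v * T v := by ring
          rw [e2, T_mul]
          have e3 : (1 - T v) * (T (v + v) * u) = T (v + v) * ((1 - T v) * u) := by ring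
          rw [e3, hone]
          ring
        · rw [if_neg h, if_neg h]
          have e1 : (1 - T v) * (u - 1 - 0) = (1 - T v) * u - (1 - T v) := by ring
          rw [e1, hone]
          have e3 : (1 - T v) * (T v * u) = T v * ((1 - T v) * u) := by ring
          rw [e3, hone]
          ring
      exact mul_left_cancel₀ (one_sub_T_ne_zero (by omega)) h2
    rw [key]
    refine Olt.mul_onn ?_ hOu
    by_cases h : v = a
    · rw [if_pos h]; exact Olt_T (by omega)
    · rw [if_neg h]; exact Olt_T (by omega)


/-- Expansion of a single factor `(t^v or 1) * (1 - t^v)⁻¹` up to order `a`. -/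
lemma factor {a v : ℤ} (ha : 0 < a) (hv0 : v ≠ 0) (hv : a ≤ |v|) (b : Prop) [Decidable b] :
    ∃ ρ : LK, Onn ρ ∧ Olt a ρ ∧
      (if b then T v else 1) * (1 - T v)⁻¹
        = HahnSeries.C (((if 0 < v then 1 else 0) - (if b then 1 else 0)) : ℚ)
          + HahnSeries.C ((if v = a then 1 else if v = -a then -1 else 0) : ℚ) * T a + ρ := by
  by_cases hpos : 0 < v
  · have hva : a ≤ v := by rw [abs_of_pos hpos] at hv; exact hv
    have hvna : v ≠ -a := by omega
    obtain ⟨ρ₀, hρn, hρl, hρe⟩ := inv_one_sub ha hva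
    by_cases hb : b
    · by_cases hva' : v = a
      · refine ⟨T (v + v) + T v * ρ₀, (Onn_T (by omega)).add ((Onn_T (by omega)).mul hρn),
          (Olt_T (by omega)).add ((Onn_T (by omega)).mul_olt hρl), ?_⟩
        simp only [if_pos hva', if_pos hb, if_pos hpos, if_neg hvna] at hρe ⊢
        rw [hρe, ← T_mul v v]
        subst hva'
        simp only [map_sub, map_one, sub_self, map_zero]
        ring
      · refine ⟨T v + T v * ρ₀, (Onn_T (by omega)).add ((Onn_T (by omega)).mul hρn),
          (Olt_T (by omega)).add ((Onn_T (by omega)).mul_olt hρl), ?_⟩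
        simp only [if_pos hb, if_pos hpos, if_neg hvna, if_neg hva'] at hρe ⊢
        rw [hρe]
        simp only [map_sub, map_one, sub_self, map_zero]
        ring
    · refine ⟨ρ₀, hρn, hρl, ?_⟩
      by_cases hva' : v = a
      · simp only [if_pos hva', if_neg hb, if_pos hpos, if_neg hvna] at hρe ⊢
        rw [one_mul, hρe]
        simp only [map_sub, map_zero, sub_zero, map_one]
        try ring
      · simp only [if_neg hva', if_neg hb, if_pos hpos, if_neg hvna] at hρe ⊢
        rw [one_mul, hρe]
        simp only [map_sub, map_zero, sub_zero, map_one, zero_mul]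
        try ring
  · have hneg : v < 0 := by omega
    have hva : a ≤ -v := by rw [abs_of_neg hneg] at hv; exact hv
    have hvna : ¬ (v = a) := by omega
    obtain ⟨ρ₀, hρn, hρl, hρe⟩ := inv_one_sub ha hva
    have hkey : (1 - T v)⁻¹ = -(T (-v) * (1 - T (-v))⁻¹) := by
      refine inv_eq_of_mul_eq_one_right ?_
      have e1 : (1 - T v) * -(T (-v) * (1 - T (-v))⁻¹)
          = (T v * T (-v) - T (-v)) * (1 - T (-v))⁻¹ := by ring
      rw [e1, T_mul, show v + -v = 0 by omega, T_zero]
      exact mul_inv_cancel₀ (one_sub_T_ne_zero (by omega))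
    by_cases hb : b
    · refine ⟨-ρ₀, hρn.neg, hρl.neg, ?_⟩
      have e1 : T v * (1 - T v)⁻¹ = -((T v * T (-v)) * (1 - T (-v))⁻¹) := by rw [hkey]; ring
      rw [if_pos hb, e1, T_mul, show v + -v = 0 by omega, T_zero, one_mul, hρe]
      by_cases hva' : v = -a
      · simp only [if_pos (show -v = a by omega), if_pos hva', if_neg hpos, if_pos hb,
          if_neg hvna, map_neg, map_one, zero_sub]
        ring
      · simp only [if_neg (show ¬ (-v = a) by omega), if_neg hva', if_neg hpos, if_pos hb,
          if_neg hvna, map_neg, map_one, map_zero, zero_sub]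
        ring
    · rw [if_neg hb, one_mul, hkey, hρe]
      by_cases hva' : v = -a
      · refine ⟨-(T (-v + -v)) - T (-v) * ρ₀,
          (Onn_T (by omega)).neg.sub ((Onn_T (by omega)).mul hρn),
          (Olt_T (by omega)).neg.sub ((Onn_T (by omega)).mul_olt hρl), ?_⟩
        simp only [if_pos (show -v = a by omega), if_pos hva', if_neg hpos, if_neg hb,
          if_neg hvna, map_neg, map_one, sub_self, map_zero]
        rw [← T_mul (-v) (-v), show a = -v by omega]
        ring
      · refine ⟨-(T (-v)) - T (-v) * ρ₀,
          (Onn_T (by omega)).neg.sub ((Onn_T (by omega)).mul hρn),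
          (Olt_T (by omega)).neg.sub ((Onn_T (by omega)).mul_olt hρl), ?_⟩
        simp only [if_neg (show ¬ (-v = a) by omega), if_neg hva', if_neg hpos, if_neg hb,
          if_neg hvna, sub_self, map_zero, zero_mul]
        ring


/-- Expansion of a product of factors each of the form `C c + C d * t^a + (small)`. -/
lemma prod_expand {a : ℤ} (ha : 0 < a) {ι : Type*} [DecidableEq ι] (s : Finset ι)
    (f : ι → LK) (c d : ι → ℚ)
    (h : ∀ j ∈ s, ∃ ρ, Onn ρ ∧ Olt a ρ ∧
      f j = HahnSeries.C (c j) + HahnSeries.C (d j) * T a + ρ) :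
    ∃ ρ, Onn ρ ∧ Olt a ρ ∧ ∏ j ∈ s, f j
      = HahnSeries.C (∏ j ∈ s, c j)
        + HahnSeries.C (∑ j ∈ s, d j * ∏ i ∈ s.erase j, c i) * T a + ρ := by
  classical
  induction s using Finset.induction_on with
  | empty =>
      refine ⟨0, Onn_zero, Olt_zero, ?_⟩
      simp
  | insert x s hx IH =>
      obtain ⟨ρx, hρxn, hρxl, hρxe⟩ := h x (Finset.mem_insert_self x s)
      obtain ⟨R, hRn, hRl, hRe⟩ := IH (fun j hj => h j (Finset.mem_insert_of_mem hj))
      set Cs : ℚ := ∏ j ∈ s, c j with hCs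
      set Ds : ℚ := ∑ j ∈ s, d j * ∏ i ∈ s.erase j, c i with hDs
      refine ⟨HahnSeries.C (d x * Ds) * (T a * T a)
          + ρx * (HahnSeries.C Cs + HahnSeries.C Ds * T a + R)
          + (HahnSeries.C (c x) + HahnSeries.C (d x) * T a) * R, ?_, ?_, ?_⟩
      · refine ((Onn_C _).mul ((Onn_T ha.le).mul (Onn_T ha.le))).add ?_ |>.add ?_
        · exact hρxn.mul (((Onn_C _).add (Onn_C_mul_T _ ha.le)).add hRn)
        · exact ((Onn_C _).add (Onn_C_mul_T _ ha.le)).mul hRn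
      · refine (((Onn_C _).mul_olt ?_).add ?_).add ?_
        · rw [T_mul]; exact Olt_T (by omega)
        · exact hρxl.mul_onn (((Onn_C _).add (Onn_C_mul_T _ ha.le)).add hRn)
        · exact ((Onn_C _).add (Onn_C_mul_T _ ha.le)).mul_olt hRl
      · rw [Finset.prod_insert hx, hρxe, hRe]
        have hsum : ∑ j ∈ insert x s, d j * ∏ i ∈ (insert x s).erase j, c i
            = d x * Cs + c x * Ds := by
          rw [Finset.sum_insert hx, Finset.erase_insert hx, ← hCs]
          congr 1
          rw [hDs, Finset.mul_sum]
          refine Finset.sum_congr rfl fun j hj => ?_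
          have hjx : j ≠ x := fun h' => hx (h' ▸ hj)
          rw [Finset.erase_insert_of_ne hjx.symm,
            Finset.prod_insert (fun h' => hx (Finset.mem_of_mem_erase h'))]
          ring
        rw [Finset.prod_insert hx, ← hCs, hsum]
        simp only [map_mul, map_add]
        ring


/-- The inner combinatorial sum over `k`-element subsets. -/
lemma comb {ι : Type*} [DecidableEq ι] [Fintype ι] (wt : ι → ℤ) (hwt : ∀ i, wt i ≠ 0)
    (j : ι) (k : ℕ) :
    ∑ S ∈ (Finset.univ : Finset ι).powersetCard k,
      ∏ i ∈ Finset.univ.erase j,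
        ((if 0 < wt i then (1:ℚ) else 0) - (if i ∈ S then 1 else 0))
    = (-1) ^ ((Finset.univ.filter fun i => wt i < 0).erase j).card *
      ((if ((Finset.univ.filter fun i => wt i < 0).erase j).card = k then 1 else 0)
        + (if ((Finset.univ.filter fun i => wt i < 0).erase j).card + 1 = k then 1 else 0)) := by
  classical
  set NE : Finset ι := (Finset.univ.filter fun i => wt i < 0).erase j with hNE
  set m : ℕ := NE.card with hm
  -- Step A: pointwise evaluation of the product
  have hA : ∀ S : Finset ι,
      ∏ i ∈ Finset.univ.erase j,
        ((if 0 < wt i then (1:ℚ) else 0) - (if i ∈ S then 1 else 0))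
      = if S.erase j = NE then (-1) ^ m else 0 := by
    intro S
    by_cases hS : S.erase j = NE
    · rw [if_pos hS]
      have hmem : ∀ i ∈ Finset.univ.erase j, (i ∈ S ↔ wt i < 0) := by
        intro i hi
        have hij : i ≠ j := Finset.ne_of_mem_erase hi
        constructor
        · intro hiS
          have : i ∈ S.erase j := Finset.mem_erase.2 ⟨hij, hiS⟩
          rw [hS, hNE] at this
          exact (Finset.mem_filter.1 (Finset.mem_of_mem_erase this)).2
        · intro hneg
          have : i ∈ NE := by
            rw [hNE]
            exact Finset.mem_erase.2 ⟨hij, Finset.mem_filter.2 ⟨Finset.mem_univ i, hneg⟩⟩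
          rw [← hS] at this
          exact Finset.mem_of_mem_erase this
      have : ∏ i ∈ Finset.univ.erase j,
          ((if 0 < wt i then (1:ℚ) else 0) - (if i ∈ S then 1 else 0))
          = ∏ i ∈ Finset.univ.erase j, (if wt i < 0 then (-1:ℚ) else 1) := by
        refine Finset.prod_congr rfl fun i hi => ?_
        by_cases hneg : wt i < 0
        · rw [if_pos hneg, if_neg (by omega), if_pos ((hmem i hi).2 hneg)]
          ring
        · have hpos : 0 < wt i := by have := hwt i; omega
          rw [if_neg hneg, if_pos hpos, if_neg (fun h => hneg ((hmem i hi).1 h))]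
          ring
      rw [this, Finset.prod_ite (f := fun _ => (-1:ℚ)) (g := fun _ => (1:ℚ)),
        Finset.prod_const, Finset.prod_const, one_pow, mul_one]
      congr 1
      rw [hm, hNE]
      congr 1
      ext i
      simp only [Finset.mem_filter, Finset.mem_erase, Finset.mem_univ, true_and]
      tauto
    · rw [if_neg hS]
      have : ∃ i, ¬ (i ∈ S.erase j ↔ i ∈ NE) := by
        by_contra hall
        push_neg at hall
        exact hS (Finset.ext fun i => hall i)
      obtain ⟨i, hi⟩ := this
      by_cases hin : i ∈ S.erase j
      · have h1 : i ∈ S.erase j := hin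
        have h2 : i ∉ NE := fun h => hi ⟨fun _ => h, fun _ => hin⟩
        -- i ∈ S.erase j, i ∉ NE
        have hij : i ≠ j := Finset.ne_of_mem_erase h1
        have hiS : i ∈ S := Finset.mem_of_mem_erase h1
        have hnneg : ¬ wt i < 0 := by
          intro hneg
          exact h2 (Finset.mem_erase.2 ⟨hij, Finset.mem_filter.2 ⟨Finset.mem_univ i, hneg⟩⟩)
        have hpos : 0 < wt i := by have := hwt i; omega
        refine Finset.prod_eq_zero (Finset.mem_erase.2 ⟨hij, Finset.mem_univ i⟩) ?_
        rw [if_pos hpos, if_pos hiS]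
        ring
      · have h2 : i ∉ S.erase j := hin
        have h1 : i ∈ NE := by
          by_contra h
          exact hi ⟨fun h' => absurd h' hin, fun h' => absurd h' h⟩
        -- i ∉ S.erase j, i ∈ NE
        have hij : i ≠ j := Finset.ne_of_mem_erase h1
        have hneg : wt i < 0 := (Finset.mem_filter.1 (Finset.mem_of_mem_erase h1)).2
        have hiS : i ∉ S := fun h => h2 (Finset.mem_erase.2 ⟨hij, h⟩)
        refine Finset.prod_eq_zero (Finset.mem_erase.2 ⟨hij, Finset.mem_univ i⟩) ?_
        rw [if_neg (by omega), if_neg hiS]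
        ring
  -- Step B: count the subsets
  have hjNE : j ∉ NE := Finset.notMem_erase j _
  have hfil : ((Finset.univ : Finset ι).powersetCard k).filter (fun S => S.erase j = NE)
      = if m = k then {NE} else if m + 1 = k then {insert j NE} else ∅ := by
    ext S
    simp only [Finset.mem_filter, Finset.mem_powersetCard, Finset.subset_univ, true_and]
    constructor
    · rintro ⟨hcard, herase⟩
      by_cases hj : j ∈ S
      · have hSeq : S = insert j NE := by rw [← herase, Finset.insert_erase hj]
        have hc : m + 1 = k := by
          rw [hSeq, Finset.card_insert_of_notMem hjNE] at hcard
          omega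
        rw [if_neg (by omega), if_pos hc]
        simp [hSeq]
      · have hSeq : S = NE := by rw [← herase, Finset.erase_eq_of_notMem hj]
        have hc : m = k := by rw [hm, ← hSeq]; exact hcard
        rw [if_pos hc]
        simp [hSeq]
    · intro hS
      by_cases h1 : m = k
      · rw [if_pos h1] at hS
        rw [Finset.mem_singleton] at hS
        subst hS
        exact ⟨h1, Finset.erase_eq_of_notMem hjNE⟩
      · rw [if_neg h1] at hS
        by_cases h2 : m + 1 = k
        · rw [if_pos h2] at hS
          rw [Finset.mem_singleton] at hS
          subst hS
          refine ⟨?_, Finset.erase_insert hjNE⟩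
          rw [Finset.card_insert_of_notMem hjNE]
          omega
        · rw [if_neg h2] at hS
          simp at hS
  calc ∑ S ∈ (Finset.univ : Finset ι).powersetCard k,
        ∏ i ∈ Finset.univ.erase j,
          ((if 0 < wt i then (1:ℚ) else 0) - (if i ∈ S then 1 else 0))
      = ∑ S ∈ (Finset.univ : Finset ι).powersetCard k,
          (if S.erase j = NE then ((-1:ℚ)) ^ m else 0) :=
        Finset.sum_congr rfl fun S _ => hA S
    _ = ∑ S ∈ ((Finset.univ : Finset ι).powersetCard k).filter (fun S => S.erase j = NE),
          ((-1:ℚ)) ^ m := (Finset.sum_filter _ _).symm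
    _ = ((-1:ℚ)) ^ m * (((Finset.univ : Finset ι).powersetCard k).filter
          (fun S => S.erase j = NE)).card := by
        rw [Finset.sum_const, nsmul_eq_mul, mul_comm]
    _ = (-1) ^ m * ((if m = k then 1 else 0) + (if m + 1 = k then 1 else 0)) := by
        rw [hfil]
        congr 1
        by_cases h1 : m = k
        · rw [if_pos h1, if_pos h1, if_neg (by omega)]
          simp
        · rw [if_neg h1, if_neg h1]
          by_cases h2 : m + 1 = k
          · rw [if_pos h2, if_pos h2]
            simp
          · rw [if_neg h2, if_neg h2]
            simp


/-- Coefficient extraction as an additive hom. -/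
def coefa (a : ℤ) : LK →+ ℚ where
  toFun x := x.coeff a
  map_zero' := rfl
  map_add' _ _ := coeff_add

lemma coefa_apply (a : ℤ) (x : LK) : coefa a x = x.coeff a := rfl

/-- The key step: coefficient of `t^a` in the `k`-th Li identity. -/
lemma key (n : ℕ) (a : ℤ) (ha : 0 < a) (P : Type*) [Fintype P] (w : P → Fin n → ℤ)
    (hw : ∀ p j, w p j ≠ 0 ∧ a ≤ |w p j|) (k : ℕ)
    (hLi : ∑ p : P,
          (∑ S ∈ (Finset.univ : Finset (Fin n)).powersetCard k,
              ∏ j ∈ S, (RatFunc.X : RatFunc ℚ) ^ (w p j)) /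
            ∏ j : Fin n, (1 - (RatFunc.X : RatFunc ℚ) ^ (w p j))
        = (-1) ^ k *
            (((Finset.univ : Finset P).filter fun p =>
                ((Finset.univ : Finset (Fin n)).filter fun j => w p j < 0).card = k).card
              : RatFunc ℚ)) :
    ((∑ p ∈ (Finset.univ : Finset P).filter
        (fun p => ((Finset.univ : Finset (Fin n)).filter fun j => w p j < 0).card = k),
        ((Finset.univ : Finset (Fin n)).filter fun j => w p j = a).card : ℕ) : ℚ)
      + ((∑ p ∈ (Finset.univ : Finset P).filter
        (fun p => ((Finset.univ : Finset (Fin n)).filter fun j => w p j < 0).card = k),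
        ((Finset.univ : Finset (Fin n)).filter fun j => w p j = -a).card : ℕ) : ℚ)
    = ((∑ p ∈ (Finset.univ : Finset P).filter
        (fun p => ((Finset.univ : Finset (Fin n)).filter fun j => w p j < 0).card + 1 = k),
        ((Finset.univ : Finset (Fin n)).filter fun j => w p j = a).card : ℕ) : ℚ)
      + ((∑ p ∈ (Finset.univ : Finset P).filter
        (fun p => ((Finset.univ : Finset (Fin n)).filter fun j => w p j < 0).card = k + 1),
        ((Finset.univ : Finset (Fin n)).filter fun j => w p j = -a).card : ℕ) : ℚ) := by
  classical
  have ha0 : a ≠ 0 := by omega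
  set lam : P → ℕ := fun p => ((Finset.univ : Finset (Fin n)).filter fun j => w p j < 0).card
    with hlam
  set na : P → ℕ := fun p => ((Finset.univ : Finset (Fin n)).filter fun j => w p j = a).card
    with hna
  set nb : P → ℕ := fun p => ((Finset.univ : Finset (Fin n)).filter fun j => w p j = -a).card
    with hnb
  set c : P → Finset (Fin n) → Fin n → ℚ :=
    fun p S j => (if 0 < w p j then (1:ℚ) else 0) - (if j ∈ S then 1 else 0) with hc
  set d : P → Fin n → ℚ :=
    fun p j => if w p j = a then (1:ℚ) else if w p j = -a then -1 else 0 with hd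
  -- product expansion for each p, S
  have hprodS : ∀ (p : P) (S : Finset (Fin n)), ∃ ρ, Onn ρ ∧ Olt a ρ ∧
      ∏ j : Fin n, ((if j ∈ S then T (w p j) else 1) * (1 - T (w p j))⁻¹)
        = HahnSeries.C (∏ j : Fin n, c p S j)
          + HahnSeries.C (∑ j : Fin n, d p j * ∏ i ∈ Finset.univ.erase j, c p S i) * T a
          + ρ := by
    intro p S
    exact prod_expand ha Finset.univ _ _ _
      (fun j _ => factor ha (hw p j).1 (hw p j).2 (j ∈ S))
  choose ρ hρn hρl hρe using hprodS
  set φ := algebraMap (RatFunc ℚ) LK with hφdef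
  -- image of each term under φ
  have hφ : ∀ p : P,
      φ ((∑ S ∈ (Finset.univ : Finset (Fin n)).powersetCard k,
            ∏ j ∈ S, (RatFunc.X : RatFunc ℚ) ^ (w p j)) /
          ∏ j : Fin n, (1 - (RatFunc.X : RatFunc ℚ) ^ (w p j)))
        = ∑ S ∈ (Finset.univ : Finset (Fin n)).powersetCard k,
            ∏ j : Fin n, ((if j ∈ S then T (w p j) else 1) * (1 - T (w p j))⁻¹) := by
    intro p
    rw [map_div₀, map_sum]
    have hden : φ (∏ j : Fin n, (1 - (RatFunc.X : RatFunc ℚ) ^ (w p j)))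
        = ∏ j : Fin n, (1 - T (w p j)) := by
      rw [map_prod]
      exact Finset.prod_congr rfl fun j _ => by rw [map_sub, map_one, coe_X_zpow]
    rw [hden, Finset.sum_div]
    refine Finset.sum_congr rfl fun S _ => ?_
    have hnum : φ (∏ j ∈ S, (RatFunc.X : RatFunc ℚ) ^ (w p j)) = ∏ j ∈ S, T (w p j) := by
      rw [map_prod]
      exact Finset.prod_congr rfl fun j _ => coe_X_zpow _
    rw [hnum, Finset.prod_mul_distrib, Finset.prod_ite_mem, Finset.univ_inter,
      div_eq_mul_inv, Finset.prod_inv_distrib]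
  -- coefficient of t^a in each term
  have hcoeff : ∀ p : P,
      coefa a (φ ((∑ S ∈ (Finset.univ : Finset (Fin n)).powersetCard k,
            ∏ j ∈ S, (RatFunc.X : RatFunc ℚ) ^ (w p j)) /
          ∏ j : Fin n, (1 - (RatFunc.X : RatFunc ℚ) ^ (w p j))))
        = ∑ S ∈ (Finset.univ : Finset (Fin n)).powersetCard k,
            ∑ j : Fin n, d p j * ∏ i ∈ Finset.univ.erase j, c p S i := by
    intro p
    rw [hφ p, map_sum]
    refine Finset.sum_congr rfl fun S _ => ?_
    rw [hρe p S, coefa_apply, coeff_add, coeff_add, C_coeff, if_neg ha0,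
      C_mul_T_coeff, if_pos rfl, hρl p S a le_rfl, zero_add, add_zero]
  -- the right-hand side has zero coefficient
  have hrhs : coefa a (φ ((-1) ^ k *
      (((Finset.univ : Finset P).filter fun p => lam p = k).card : RatFunc ℚ))) = 0 := by
    rw [map_mul, map_pow, map_neg, map_one, map_natCast]
    have : ((-1 : LK)) ^ k * ((((Finset.univ : Finset P).filter fun p => lam p = k).card : ℕ) : LK)
        = HahnSeries.C (((-1 : ℚ)) ^ k *
            ((((Finset.univ : Finset P).filter fun p => lam p = k).card : ℕ) : ℚ)) := by
      rw [map_mul, map_pow, map_neg, map_one, map_natCast]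
    rw [this, coefa_apply, C_coeff, if_neg ha0]
  -- put it together
  have hmain : ∑ p : P, ∑ S ∈ (Finset.univ : Finset (Fin n)).powersetCard k,
      ∑ j : Fin n, d p j * ∏ i ∈ Finset.univ.erase j, c p S i = 0 := by
    have h1 := congrArg (fun x => coefa a (φ x)) hLi
    simp only [map_sum] at h1
    rw [hrhs] at h1
    rw [← h1]
    exact (Finset.sum_congr rfl fun p _ => (hcoeff p).symm)
  -- swap sums and apply the combinatorial lemma
  have hswap : ∀ p : P,
      ∑ S ∈ (Finset.univ : Finset (Fin n)).powersetCard k,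
        ∑ j : Fin n, d p j * ∏ i ∈ Finset.univ.erase j, c p S i
      = ∑ j : Fin n, d p j *
          ((-1) ^ (((Finset.univ.filter fun i => w p i < 0).erase j).card) *
            ((if ((Finset.univ.filter fun i => w p i < 0).erase j).card = k then 1 else 0)
              + (if ((Finset.univ.filter fun i => w p i < 0).erase j).card + 1 = k then 1
                  else 0))) := by
    intro p
    rw [Finset.sum_comm]
    refine Finset.sum_congr rfl fun j _ => ?_
    rw [← Finset.mul_sum, comb (w p) (fun i => (hw p i).1) j k]
  -- evaluate the j-sum for each p
  have hval : ∀ p : P,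
      ∑ j : Fin n, d p j *
          ((-1) ^ (((Finset.univ.filter fun i => w p i < 0).erase j).card) *
            ((if ((Finset.univ.filter fun i => w p i < 0).erase j).card = k then 1 else 0)
              + (if ((Finset.univ.filter fun i => w p i < 0).erase j).card + 1 = k then 1
                  else 0)))
      = (-1) ^ k * ((if lam p = k then ((na p : ℚ) + (nb p : ℚ)) else 0)
          - (if lam p + 1 = k then (na p : ℚ) else 0)
          - (if lam p = k + 1 then (nb p : ℚ) else 0)) := by
    intro p
    set G : Fin n → ℚ := fun j =>
      (-1) ^ (((Finset.univ.filter fun i => w p i < 0).erase j).card) *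
        ((if ((Finset.univ.filter fun i => w p i < 0).erase j).card = k then 1 else 0)
          + (if ((Finset.univ.filter fun i => w p i < 0).erase j).card + 1 = k then 1 else 0))
      with hG
    have hsplit : ∀ j : Fin n, d p j * G j
        = (if w p j = a then G j else 0) + (if w p j = -a then -(G j) else 0) := by
      intro j
      simp only [hd]
      by_cases h1 : w p j = a
      · rw [if_pos h1, if_pos h1, if_neg (show ¬ w p j = -a by omega), add_zero, one_mul]
      · by_cases h2 : w p j = -a
        · rw [if_neg h1, if_pos h2, if_neg h1, if_pos h2, zero_add]
          ring
        · rw [if_neg h1, if_neg h2, if_neg h1, if_neg h2, add_zero, zero_mul]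
    rw [Finset.sum_congr rfl fun j _ => hsplit j, Finset.sum_add_distrib,
      ← Finset.sum_filter, ← Finset.sum_filter]
    have hGa : ∀ j ∈ Finset.univ.filter (fun j => w p j = a),
        G j = (-1) ^ (lam p) *
          ((if lam p = k then (1:ℚ) else 0) + (if lam p + 1 = k then 1 else 0)) := by
      intro j hj
      have hja : w p j = a := (Finset.mem_filter.1 hj).2
      have hnm : j ∉ (Finset.univ.filter fun i => w p i < 0) := by
        intro hmem
        have := (Finset.mem_filter.1 hmem).2
        omega
      simp only [hG, Finset.erase_eq_of_notMem hnm, hlam]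
    have hGb : ∀ j ∈ Finset.univ.filter (fun j => w p j = -a),
        -(G j) = (-1) ^ (lam p) *
          ((if lam p = k + 1 then (1:ℚ) else 0) + (if lam p = k then 1 else 0)) := by
      intro j hj
      have hja : w p j = -a := (Finset.mem_filter.1 hj).2
      have hmem : j ∈ (Finset.univ.filter fun i => w p i < 0) := by
        refine Finset.mem_filter.2 ⟨Finset.mem_univ j, by omega⟩
      have hm1 : ((Finset.univ.filter fun i => w p i < 0).erase j).card + 1 = lam p :=
        Finset.card_erase_add_one hmem
      simp only [hG]
      set m : ℕ := ((Finset.univ.filter fun i => w p i < 0).erase j).card with hmdef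
      have e1 : (if m = k then (1:ℚ) else 0) = (if lam p = k + 1 then 1 else 0) :=
        if_congr (by omega) rfl rfl
      have e2 : (if m + 1 = k then (1:ℚ) else 0) = (if lam p = k then 1 else 0) :=
        if_congr (by omega) rfl rfl
      have e3 : ((-1:ℚ)) ^ (lam p) = -((-1) ^ m) := by
        rw [← hm1, pow_succ]
        ring
      rw [e1, e2, e3]
      ring
    rw [Finset.sum_congr rfl hGa, Finset.sum_congr rfl hGb, Finset.sum_const,
      Finset.sum_const, nsmul_eq_mul, nsmul_eq_mul]
    simp only [hna, hnb]
    by_cases h1 : lam p = k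
    · simp only [if_pos h1, if_neg (show ¬ lam p + 1 = k by omega),
        if_neg (show ¬ lam p = k + 1 by omega)]
      rw [h1]
      ring
    · simp only [if_neg h1]
      by_cases h2 : lam p + 1 = k
      · simp only [if_pos h2, if_neg (show ¬ lam p = k + 1 by omega)]
        rw [← h2]
        ring
      · simp only [if_neg h2]
        by_cases h3 : lam p = k + 1
        · simp only [if_pos h3]
          rw [h3]
          ring
        · simp only [if_neg h3]
          ring
  -- conclude
  have hfin : ∑ p : P, ((-1:ℚ)) ^ k * ((if lam p = k then ((na p : ℚ) + (nb p : ℚ)) else 0)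
      - (if lam p + 1 = k then (na p : ℚ) else 0)
      - (if lam p = k + 1 then (nb p : ℚ) else 0)) = 0 := by
    have heq : ∑ p : P, ((-1:ℚ)) ^ k * ((if lam p = k then ((na p : ℚ) + (nb p : ℚ)) else 0)
        - (if lam p + 1 = k then (na p : ℚ) else 0)
        - (if lam p = k + 1 then (nb p : ℚ) else 0))
        = ∑ p : P, ∑ S ∈ (Finset.univ : Finset (Fin n)).powersetCard k,
            ∑ j : Fin n, d p j * ∏ i ∈ Finset.univ.erase j, c p S i :=
      Finset.sum_congr rfl fun p _ => ((hval p).symm.trans (hswap p).symm)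
    rw [heq]
    exact hmain
  rw [← Finset.mul_sum] at hfin
  have hk0 : ((-1:ℚ)) ^ k ≠ 0 := pow_ne_zero k (by norm_num)
  have hsum0 : ∑ p : P, ((if lam p = k then ((na p : ℚ) + (nb p : ℚ)) else 0)
      - (if lam p + 1 = k then (na p : ℚ) else 0)
      - (if lam p = k + 1 then (nb p : ℚ) else 0)) = 0 := by
    rcases mul_eq_zero.1 hfin with h | h
    · exact absurd h hk0
    · exact h
  rw [Finset.sum_sub_distrib, Finset.sum_sub_distrib, sub_sub, sub_eq_zero] at hsum0
  have emerge : ∑ p : P, (if lam p = k then ((na p : ℚ) + (nb p : ℚ)) else 0)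
      = ∑ p : P, (if lam p = k then (na p : ℚ) else 0)
        + ∑ p : P, (if lam p = k then (nb p : ℚ) else 0) := by
    rw [← Finset.sum_add_distrib]
    refine Finset.sum_congr rfl fun p _ => ?_
    by_cases h : lam p = k <;> simp [h]
  rw [emerge] at hsum0
  push_cast
  rw [Finset.sum_filter, Finset.sum_filter, Finset.sum_filter, Finset.sum_filter]
  exact hsum0

end LiAux

end LiAux

/-- the combinatorial core of Proposition 2.2.  The weight data
`w : P → Fin n → ℤ` at the points of `P` consist of nonzero integers of absolute
value at least `a > 0`.  `(univ.filter fun j => w p j < 0).card` is the index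
`λ_p`, and the Li identities are assumed in the field `ℚ(t) = RatFunc ℚ`, with
`t = RatFunc.X` and `e_k` the `k`-th elementary symmetric polynomial (the sum of
products over `k`-element subsets).  Conclusion: for every `k ∈ {0, …, n-1}`,
the number of occurrences of the weight `a` at points of index `k` equals the
number of occurrences of `-a` at points of index `k+1`. -/
theorem li_identities_imply_weight_matching
    (n : ℕ) (hn : 1 ≤ n) (a : ℤ) (ha : 0 < a)
    (P : Type*) [Fintype P] (w : P → Fin n → ℤ)
    (hw : ∀ p j, w p j ≠ 0 ∧ a ≤ |w p j|)
    (hLi : ∀ k ≤ n,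
      ∑ p : P,
          (∑ S ∈ (univ : Finset (Fin n)).powersetCard k,
              ∏ j ∈ S, (RatFunc.X : RatFunc ℚ) ^ (w p j)) /
            ∏ j : Fin n, (1 - (RatFunc.X : RatFunc ℚ) ^ (w p j))
        = (-1) ^ k *
            (((univ : Finset P).filter fun p =>
                ((univ : Finset (Fin n)).filter fun j => w p j < 0).card = k).card
              : RatFunc ℚ)) :
    ∀ k < n,
      ∑ p ∈ (univ : Finset P).filter
          (fun p => ((univ : Finset (Fin n)).filter fun j => w p j < 0).card = k),
          ((univ : Finset (Fin n)).filter fun j => w p j = a).card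
        = ∑ p ∈ (univ : Finset P).filter
            (fun p => ((univ : Finset (Fin n)).filter fun j => w p j < 0).card = k + 1),
            ((univ : Finset (Fin n)).filter fun j => w p j = -a).card := by
  intro k
  have key := fun (k : ℕ) (hk : k ≤ n) => LiAux.key n a ha P w hw k (hLi k hk)
  have hB0 : ∀ p ∈ (univ : Finset P).filter
      (fun p => ((univ : Finset (Fin n)).filter fun j => w p j < 0).card = 0),
      (((univ : Finset (Fin n)).filter fun j => w p j = -a).card : ℕ) = 0 := by
    intro p hp
    have hlam0 := (Finset.mem_filter.1 hp).2
    rw [Finset.card_eq_zero] at hlam0 ⊢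
    rw [Finset.eq_empty_iff_forall_notMem] at hlam0 ⊢
    intro j hj
    have hja : w p j = -a := (Finset.mem_filter.1 hj).2
    exact hlam0 j (Finset.mem_filter.2 ⟨Finset.mem_univ j, by omega⟩)
  induction k with
  | zero =>
      intro _
      have h0 := key 0 (Nat.zero_le n)
      have hA'0 : (univ : Finset P).filter
          (fun p => ((univ : Finset (Fin n)).filter fun j => w p j < 0).card + 1 = 0) = ∅ :=
        Finset.filter_false_of_mem (fun p _ => by omega)
      rw [hA'0, Finset.sum_empty, Finset.sum_eq_zero hB0] at h0
      push_cast at h0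
      have h2 : ((∑ p ∈ (univ : Finset P).filter
          (fun p => ((univ : Finset (Fin n)).filter fun j => w p j < 0).card = 0),
          ((univ : Finset (Fin n)).filter fun j => w p j = a).card : ℕ) : ℚ)
          = ((∑ p ∈ (univ : Finset P).filter
          (fun p => ((univ : Finset (Fin n)).filter fun j => w p j < 0).card = 0 + 1),
          ((univ : Finset (Fin n)).filter fun j => w p j = -a).card : ℕ) : ℚ) := by
        push_cast
        linarith
      exact_mod_cast h2
  | succ k IH =>
      intro hk
      have h1 := key (k + 1) (by omega)
      have hIH := IH (by omega)
      have hfil : (univ : Finset P).filter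
          (fun p => ((univ : Finset (Fin n)).filter fun j => w p j < 0).card + 1 = k + 1)
          = (univ : Finset P).filter
          (fun p => ((univ : Finset (Fin n)).filter fun j => w p j < 0).card = k) :=
        Finset.filter_congr (fun p _ => by omega)
      rw [hfil, hIH] at h1
      have h2 : ((∑ p ∈ (univ : Finset P).filter
          (fun p => ((univ : Finset (Fin n)).filter fun j => w p j < 0).card = k + 1),
          ((univ : Finset (Fin n)).filter fun j => w p j = a).card : ℕ) : ℚ)
          = ((∑ p ∈ (univ : Finset P).filter
          (fun p => ((univ : Finset (Fin n)).filter fun j => w p j < 0).card = k + 1 + 1),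
          ((univ : Finset (Fin n)).filter fun j => w p j = -a).card : ℕ) : ℚ) := by
        linarith
      exact_mod_cast h2
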